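/- If n is even and H = |b⟩⟨b̄| + |b̄⟩⟨b| where b ∈ {0,1}^n has Hamming weight n/2 and b̄ is its bitwise complement, then for θ ≠ 0 mod 2π the unitary V = exp(iθH) satisfies det(V^(n/2,+)) = e^{iθ} and det(V^(n/2,−)) = e^{−iθ}, where V^(n/2,±) are the restrictions of V to the intersections of the Hamming-weight-n/2 sector with the ±1 eigenspaces of X^{⊗n}; in particular V is not a product of exponentials exp(iα R_{ij}) of XY interactions. -/

import Mathlib

open Matrix
open scoped BigOperators

noncomputable section

/-- Computational basis states of `n` qubits: bit strings of length `n`. -/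
abbrev QState (n : ℕ) := Fin n → Fin 2

/-- Matrices on the `n`-qubit Hilbert space `(ℂ²)^⊗n`, written in the computational basis. -/
abbrev QMat (n : ℕ) := Matrix (QState n) (QState n) ℂ

/-- Matrix exponential, defined by its power series. -/
def mexp {m : Type*} [Fintype m] [DecidableEq m] (A : Matrix m m ℂ) : Matrix m m ℂ :=
  ∑' k : ℕ, ((k.factorial : ℂ)⁻¹) • A ^ k

/-- Hamming weight of a bit string. -/
def hamWeight {n : ℕ} (b : QState n) : ℕ := ∑ j, (b j : ℕ)

/-- Bitwise negation of a bit string. -/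
def bflip {n : ℕ} (b : QState n) : QState n := fun j => b j + 1

/-- The operator `X^{⊗n}` flipping all qubits. -/
def XallMat (n : ℕ) : QMat n := fun b b' => if b' = bflip b then 1 else 0

/-- The projector `Π^(m)` onto the span of computational basis states of Hamming weight `m`. -/
def ProjW (n m : ℕ) : QMat n :=
  Matrix.diagonal (fun b => if hamWeight b = m then 1 else 0)

/-- The eigenvalue `±1` of Pauli `Z` on a single-qubit basis label. -/
def zval : Fin 2 → ℂ := fun x => if x = 0 then 1 else -1

/-- Pauli `Z` acting on qubit `j` (tensored with identity elsewhere). -/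
def Zmat (n : ℕ) (j : Fin n) : QMat n := Matrix.diagonal (fun b => zval (b j))

/-- The total Hamiltonian `Σ_j Z_j`. -/
def sumZ (n : ℕ) : QMat n := ∑ j, Zmat n j

/-- The XY interaction `R_{ij} = (X_i X_j + Y_i Y_j)/2 = |01⟩⟨10| + |10⟩⟨01|` on
qubits `i, j`, tensored with identity elsewhere. -/
def Rmat (n : ℕ) (i j : Fin n) : QMat n := fun b b' =>
  if b i ≠ b j ∧ b' i = b j ∧ b' j = b i ∧ (∀ k, k ≠ i → k ≠ j → b' k = b k) then 1 else 0

/-- The determinant of (the block of) `A` on the range of a projector `P`,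
computed as `det (P A P + (1 − P))`. -/
def sectorDet {ι : Type*} [Fintype ι] [DecidableEq ι] (P A : Matrix ι ι ℂ) : ℂ :=
  (P * A * P + (1 - P)).det



set_option linter.unusedSectionVars false
set_option linter.unusedVariables false

/-! ### Auxiliary lemmas -/

section AuxGeneric
variable {ι : Type*} [Fintype ι] [DecidableEq ι]

lemma mexp_eq (A : Matrix ι ι ℂ) : mexp A = NormedSpace.exp A := by
  rw [NormedSpace.exp_eq_tsum ℂ]; rfl

lemma mexp_add_of_commute {A B : Matrix ι ι ℂ} (h : Commute A B) :
    mexp (A + B) = mexp A * mexp B := by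
  simp only [mexp_eq]; exact Matrix.exp_add_of_commute A B h

lemma mexp_mul_mexp_neg (A : Matrix ι ι ℂ) : mexp A * mexp (-A) = 1 := by
  rw [← mexp_add_of_commute (Commute.neg_right (Commute.refl A)), add_neg_cancel,
    mexp_eq, NormedSpace.exp_zero]

lemma commute_mexp {A B : Matrix ι ι ℂ} (h : Commute A B) : Commute (mexp A) B := by
  rw [mexp_eq]; exact h.exp_left

lemma mexp_conj {S : Matrix ι ι ℂ} (hS : S * S = 1) (A : Matrix ι ι ℂ) :
    mexp (S * A * S) = S * mexp A * S := by
  simp only [mexp_eq]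
  exact Matrix.exp_units_conj ⟨S, S, hS, hS⟩ A

lemma cexp_tsum (c : ℂ) : Complex.exp c = ∑' k : ℕ, (k.factorial : ℂ)⁻¹ * c ^ k := by
  rw [Complex.exp_eq_exp_ℂ, NormedSpace.exp_eq_tsum ℂ]
  simp [smul_eq_mul]

lemma cexp_summable (c : ℂ) : Summable (fun k : ℕ => (k.factorial : ℂ)⁻¹ * c ^ k) := by
  simpa [smul_eq_mul] using NormedSpace.expSeries_summable' (𝕂 := ℂ) c

lemma mexp_summable (A : Matrix ι ι ℂ) :
    Summable (fun k : ℕ => ((k.factorial : ℂ)⁻¹) • A ^ k) := by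
  letI : SeminormedRing (Matrix ι ι ℂ) := Matrix.linftyOpSemiNormedRing
  letI : NormedRing (Matrix ι ι ℂ) := Matrix.linftyOpNormedRing
  letI : NormedAlgebra ℂ (Matrix ι ι ℂ) := Matrix.linftyOpNormedAlgebra
  exact NormedSpace.expSeries_summable' (𝕂 := ℂ) A

set_option maxHeartbeats 2000000 in
lemma mexp_smul_idem {F : Matrix ι ι ℂ} (hF : F * F = F) (c : ℂ) :
    mexp (c • F) = 1 + (Complex.exp c - 1) • F := by
  have hpow : ∀ k : ℕ, F ^ (k + 1) = F := by
    intro k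
    induction k with
    | zero => simp
    | succ k ih => rw [pow_succ, ih, hF]
  have h1 : ∀ k : ℕ, ((k.factorial : ℂ)⁻¹) • (c • F) ^ k
      = ((k.factorial : ℂ)⁻¹ * c ^ k) • F ^ k := by
    intro k; rw [smul_pow, smul_smul]
  have hsum : Summable (fun k : ℕ => ((k.factorial : ℂ)⁻¹ * c ^ k) • F ^ k) := by
    have := mexp_summable (c • F)
    simpa [h1] using this
  have hscal : Summable (fun k : ℕ => (((k+1).factorial : ℂ))⁻¹ * c ^ (k+1)) :=
    ((summable_nat_add_iff 1).2 (cexp_summable c))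
  calc mexp (c • F) = ∑' k : ℕ, ((k.factorial : ℂ)⁻¹ * c ^ k) • F ^ k := by
        rw [mexp]; exact tsum_congr h1
    _ = (((0 : ℕ).factorial : ℂ)⁻¹ * c ^ 0) • F ^ 0
        + ∑' k : ℕ, (((k+1).factorial : ℂ)⁻¹ * c ^ (k+1)) • F ^ (k+1) := by
        rw [Summable.tsum_eq_zero_add hsum]
    _ = 1 + (∑' k : ℕ, ((k+1).factorial : ℂ)⁻¹ * c ^ (k+1)) • F := by
        simp only [hpow]
        rw [Summable.tsum_smul_const hscal]
        norm_num
    _ = 1 + (Complex.exp c - 1) • F := by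
        congr 2
        have h0 := Summable.tsum_eq_zero_add (cexp_summable c)
        rw [cexp_tsum c, h0]
        norm_num

lemma sectorDet_one {P : Matrix ι ι ℂ} (hP : P * P = P) : sectorDet P 1 = 1 := by
  unfold sectorDet
  rw [mul_one, hP, add_sub_cancel, det_one]

lemma sectorDet_mul {P A B : Matrix ι ι ℂ} (hP : P * P = P)
    (hA : Commute A P) (hB : Commute B P) :
    sectorDet P (A * B) = sectorDet P A * sectorDet P B := by
  have hPA : P * A * P = A * P := by rw [← hA.eq, mul_assoc, hP]
  have hPB : P * B * P = B * P := by rw [← hB.eq, mul_assoc, hP]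
  have hPAB : P * (A * B) * P = A * B * P := by
    rw [← (hA.mul_left hB).eq, mul_assoc, hP]
  have key : (P * A * P + (1 - P)) * (P * B * P + (1 - P)) = P * (A * B) * P + (1 - P) := by
    rw [hPA, hPB, hPAB]
    have h1 : A * P * (B * P) = A * B * P := by
      rw [mul_assoc, ← mul_assoc P B P, ← hB.eq, mul_assoc B P P, hP, ← mul_assoc]
    have h2 : A * P * (1 - P) = 0 := by
      rw [mul_sub, mul_one, mul_assoc, hP, sub_self]
    have h3 : (1 - P) * (B * P) = 0 := by
      rw [sub_mul, one_mul, ← mul_assoc, ← hB.eq, mul_assoc, hP, sub_self]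
    have h4 : (1 - P) * (1 - P) = 1 - P := by
      have : (1 - P) * (1 - P) = 1 - P - P + P * P := by noncomm_ring
      rw [this, hP]; abel
    rw [add_mul, mul_add, mul_add, h1, h2, h3, h4, add_zero, zero_add]
  unfold sectorDet
  rw [← key, det_mul]

lemma sectorDet_conj {P S : Matrix ι ι ℂ} (hS : S * S = 1) (hSP : Commute S P)
    (A : Matrix ι ι ℂ) : sectorDet P (S * A * S) = sectorDet P A := by
  have h2 : A * S * P = A * P * S := by rw [mul_assoc, hSP.eq, ← mul_assoc]
  have h1 : P * (S * A * S) * P = S * (P * A * P) * S := by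
    simp only [← mul_assoc]
    rw [← hSP.eq, mul_assoc (S*P) A S, mul_assoc (S*P) (A*S) P, h2, ← mul_assoc, ← mul_assoc]
  have h0 : S * (1 - P) * S = 1 - P := by
    rw [mul_sub, mul_one, sub_mul, hS, mul_assoc, ← hSP.eq, ← mul_assoc, hS, one_mul]
  have key : P * (S * A * S) * P + (1 - P) = S * (P * A * P + (1 - P)) * S := by
    rw [mul_add, add_mul, h1, h0]
  rw [sectorDet, key, det_mul, det_mul, mul_comm, ← mul_assoc, ← det_mul, hS, det_one, one_mul,
    sectorDet]

lemma outer_mul_outer (u v u' v' : ι → ℂ) :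
    vecMulVec u v * vecMulVec u' v' = (v ⬝ᵥ u') • vecMulVec u v' := by
  ext c c'
  simp only [mul_apply, vecMulVec_apply, Matrix.smul_apply, dotProduct, smul_eq_mul, Finset.sum_mul]
  exact Finset.sum_congr rfl fun d _ => by ring

lemma smul_vecMulVec (c : ℂ) (u v : ι → ℂ) :
    c • vecMulVec u v = vecMulVec (c • u) v := by
  ext a b; simp [vecMulVec_apply, smul_eq_mul]; ring

lemma det_one_add_vecMulVec (u v : ι → ℂ) :
    (1 + vecMulVec u v).det = 1 + v ⬝ᵥ u := by
  rw [vecMulVec_eq Unit, det_one_add_replicateCol_mul_replicateRow]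

end AuxGeneric

variable {n : ℕ}

lemma bflip_bflip (c : QState n) : bflip (bflip c) = c := by
  funext k
  have : ∀ x : Fin 2, x + 1 + 1 = x := by decide
  simp [bflip, this]

lemma bflip_inj {c c' : QState n} (h : bflip c = bflip c') : c = c' := by
  rw [← bflip_bflip c, h, bflip_bflip]

lemma bflip_eq_iff {c c' : QState n} : bflip c = c' ↔ c = bflip c' := by
  constructor
  · rintro rfl; rw [bflip_bflip]
  · rintro rfl; rw [bflip_bflip]

lemma bflip_ne (c : QState n) (hn : 1 ≤ n) : bflip c ≠ c := by
  intro h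
  have := congrFun h ⟨0, hn⟩
  have h2 : ∀ x : Fin 2, x + 1 ≠ x := by decide
  exact h2 _ this

lemma hamWeight_add_bflip (c : QState n) : hamWeight c + hamWeight (bflip c) = n := by
  have : ∀ x : Fin 2, (x : ℕ) + ((x + 1 : Fin 2) : ℕ) = 1 := by decide
  simp only [hamWeight, bflip, ← Finset.sum_add_distrib, this]
  simp

lemma hamWeight_bflip_iff (hev : Even n) (c : QState n) :
    hamWeight (bflip c) = n / 2 ↔ hamWeight c = n / 2 := by
  obtain ⟨m, hm⟩ := hev
  have h := hamWeight_add_bflip c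
  omega

lemma X_mul_apply (A : QMat n) (c c' : QState n) :
    (XallMat n * A) c c' = A (bflip c) c' := by
  simp only [mul_apply, XallMat, ite_mul, one_mul, zero_mul]
  rw [Finset.sum_ite_eq' Finset.univ (bflip c) (fun d => A d c')]
  simp

lemma mul_X_apply (A : QMat n) (c c' : QState n) :
    (A * XallMat n) c c' = A c (bflip c') := by
  simp only [mul_apply, XallMat, mul_ite, mul_one, mul_zero]
  have : ∀ d : QState n, (if c' = bflip d then A c d else 0) = if d = bflip c' then A c d else 0 := by
    intro d
    apply if_congr _ rfl rfl
    rw [eq_comm, bflip_eq_iff, eq_comm]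
  rw [Finset.sum_congr rfl fun d _ => this d,
    Finset.sum_ite_eq' Finset.univ (bflip c') (fun d => A c d)]
  simp

section Vlayer
variable {b : QState n}

def upv (b : QState n) : QState n → ℂ :=
  fun d => (if d = b then 1 else 0) + (if d = bflip b then 1 else 0)
def umv (b : QState n) : QState n → ℂ :=
  fun d => (if d = b then 1 else 0) - (if d = bflip b then 1 else 0)

lemma sum_ite_point (c : QState n) : (∑ d : QState n, if d = c then (1:ℂ) else 0) = 1 := by
  rw [Finset.sum_ite_eq' Finset.univ c (fun _ => (1:ℂ))]
  simp

lemma up_dot_up (hbb : ¬ b = bflip b) : upv b ⬝ᵥ upv b = 2 := by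
  unfold dotProduct
  have h : ∀ d, upv b d * upv b d
      = (if d = b then (1:ℂ) else 0) + (if d = bflip b then 1 else 0) := by
    intro d
    by_cases h1 : d = b <;> by_cases h2 : d = bflip b <;> simp_all [upv]
  rw [Finset.sum_congr rfl fun d _ => h d, Finset.sum_add_distrib,
    sum_ite_point, sum_ite_point]
  norm_num

lemma um_dot_um (hbb : ¬ b = bflip b) : umv b ⬝ᵥ umv b = 2 := by
  unfold dotProduct
  have h : ∀ d, umv b d * umv b d
      = (if d = b then (1:ℂ) else 0) + (if d = bflip b then 1 else 0) := by
    intro d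
    by_cases h1 : d = b <;> by_cases h2 : d = bflip b <;> simp_all [umv]
  rw [Finset.sum_congr rfl fun d _ => h d, Finset.sum_add_distrib,
    sum_ite_point, sum_ite_point]
  norm_num

lemma up_dot_um (hbb : ¬ b = bflip b) : upv b ⬝ᵥ umv b = 0 := by
  unfold dotProduct
  have h : ∀ d, upv b d * umv b d
      = (if d = b then (1:ℂ) else 0) - (if d = bflip b then 1 else 0) := by
    intro d
    by_cases h1 : d = b <;> by_cases h2 : d = bflip b <;> simp_all [upv, umv]
  rw [Finset.sum_congr rfl fun d _ => h d, Finset.sum_sub_distrib,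
    sum_ite_point, sum_ite_point]
  norm_num

lemma um_dot_up (hbb : ¬ b = bflip b) : umv b ⬝ᵥ upv b = 0 := by
  unfold dotProduct
  have h : ∀ d, umv b d * upv b d
      = (if d = b then (1:ℂ) else 0) - (if d = bflip b then 1 else 0) := by
    intro d
    by_cases h1 : d = b <;> by_cases h2 : d = bflip b <;> simp_all [umv, upv]
  rw [Finset.sum_congr rfl fun d _ => h d, Finset.sum_sub_distrib,
    sum_ite_point, sum_ite_point]
  norm_num

lemma Hdecomp (hbb : ¬ b = bflip b) :
    (fun c c' => if (c = b ∧ c' = bflip b) ∨ (c = bflip b ∧ c' = b) then (1:ℂ) else 0 : QMat n)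
      = (2:ℂ)⁻¹ • vecMulVec (upv b) (upv b) - (2:ℂ)⁻¹ • vecMulVec (umv b) (umv b) := by
  ext c c'
  simp only [Matrix.sub_apply, Matrix.smul_apply, vecMulVec_apply, smul_eq_mul, upv, umv]
  by_cases h1 : c = b <;> by_cases h2 : c = bflip b <;>
    by_cases h3 : c' = b <;> by_cases h4 : c' = bflip b <;>
    simp_all <;> norm_num

lemma upv_flip (c : QState n) : upv b (bflip c) = upv b c := by
  unfold upv
  have e1 : (bflip c = b) ↔ (c = bflip b) := bflip_eq_iff
  have e2 : (bflip c = bflip b) ↔ (c = b) := ⟨bflip_inj, fun h => by rw [h]⟩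
  rw [if_congr e1 rfl rfl, if_congr e2 rfl rfl, add_comm]

lemma umv_flip (c : QState n) : umv b (bflip c) = - umv b c := by
  unfold umv
  have e1 : (bflip c = b) ↔ (c = bflip b) := bflip_eq_iff
  have e2 : (bflip c = bflip b) ↔ (c = b) := ⟨bflip_inj, fun h => by rw [h]⟩
  rw [if_congr e1 rfl rfl, if_congr e2 rfl rfl]
  ring

lemma w_upv (hwb : hamWeight b = n / 2) (hwb' : hamWeight (bflip b) = n / 2) (c : QState n) :
    (if hamWeight c = n / 2 then (1:ℂ) else 0) * upv b c = upv b c := by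
  by_cases h1 : c = b
  · subst h1; rw [if_pos hwb, one_mul]
  · by_cases h2 : c = bflip b
    · subst h2; rw [if_pos hwb', one_mul]
    · have : upv b c = 0 := by simp [upv, h1, h2]
      rw [this, mul_zero]

lemma w_umv (hwb : hamWeight b = n / 2) (hwb' : hamWeight (bflip b) = n / 2) (c : QState n) :
    (if hamWeight c = n / 2 then (1:ℂ) else 0) * umv b c = umv b c := by
  by_cases h1 : c = b
  · subst h1; rw [if_pos hwb, one_mul]
  · by_cases h2 : c = bflip b
    · subst h2; rw [if_pos hwb', one_mul]
    · have : umv b c = 0 := by simp [umv, h1, h2]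
      rw [this, mul_zero]

end Vlayer

section Projlayer
variable {b : QState n}

lemma diag_comm_X {w : QState n → ℂ} (hw : ∀ c, w (bflip c) = w c) :
    Commute (Matrix.diagonal w) (XallMat n) := by
  unfold Commute SemiconjBy
  ext c c'
  rw [mul_X_apply]
  simp only [diagonal_mul, X_mul_apply, diagonal_apply, mul_diagonal]
  by_cases h : c' = bflip c
  · subst h
    simp [XallMat, hw, mul_comm, bflip_bflip]
  · have h2 : bflip c ≠ c' := fun hh => h hh.symm
    have h3 : c ≠ bflip c' := fun hh => h (by rw [hh, bflip_bflip])
    simp [XallMat, h, h2, h3]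

lemma W_comm_X (hev : Even n) : Commute (ProjW n (n / 2)) (XallMat n) := by
  apply diag_comm_X
  intro c
  rw [if_congr (hamWeight_bflip_iff hev c) rfl rfl]

lemma W_idem (m : ℕ) : ProjW n m * ProjW n m = ProjW n m := by
  unfold ProjW
  rw [diagonal_mul_diagonal]
  apply congrArg
  funext c
  by_cases h : hamWeight c = m <;> simp [h]

lemma X_mul_X : XallMat n * XallMat n = 1 := by
  ext c c'
  rw [X_mul_apply]
  simp only [XallMat, bflip_bflip, one_apply]
  by_cases h : c' = c
  · simp [h]
  · have h' : ¬ c = c' := fun hh => h hh.symm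
    simp [h, h']

lemma comm_sector_proj {A : QMat n} (hAW : Commute A (ProjW n (n / 2)))
    (hAX : Commute A (XallMat n)) (s : ℂ) :
    Commute A (ProjW n (n / 2) * ((2:ℂ)⁻¹ • ((1 : QMat n) + s • XallMat n))) :=
  hAW.mul_right (((Commute.one_right A).add_right (hAX.smul_right s)).smul_right _)

lemma sector_proj_idem (hev : Even n) {s : ℂ} (hs : s * s = 1) :
    (ProjW n (n / 2) * ((2:ℂ)⁻¹ • ((1 : QMat n) + s • XallMat n)))
      * (ProjW n (n / 2) * ((2:ℂ)⁻¹ • ((1 : QMat n) + s • XallMat n)))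
      = ProjW n (n / 2) * ((2:ℂ)⁻¹ • ((1 : QMat n) + s • XallMat n)) := by
  have hcomm : Commute (ProjW n (n / 2)) ((2:ℂ)⁻¹ • ((1 : QMat n) + s • XallMat n)) :=
    (((Commute.one_right _).add_right ((W_comm_X hev).smul_right s)).smul_right _)
  have hYY : ((2:ℂ)⁻¹ • ((1 : QMat n) + s • XallMat n))
      * ((2:ℂ)⁻¹ • ((1 : QMat n) + s • XallMat n))
      = (2:ℂ)⁻¹ • ((2:ℂ)⁻¹ • (((1 : QMat n) + s • XallMat n) * ((1 : QMat n) + s • XallMat n))) := by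
    rw [smul_mul_assoc, mul_smul_comm]
  have hMM : ((1 : QMat n) + s • XallMat n) * ((1 : QMat n) + s • XallMat n)
      = (2:ℂ) • ((1 : QMat n) + s • XallMat n) := by
    rw [mul_add, add_mul, add_mul, one_mul, mul_one, smul_mul_smul_comm, X_mul_X, hs]
    simp only [one_mul, one_smul, two_smul]
    abel
  have habs : ∀ (P Y : QMat n), P * Y = Y * P → (P * Y) * (P * Y) = (P * P) * (Y * Y) := by
    intro P Y h
    rw [mul_assoc, ← mul_assoc Y P (Y), ← h, mul_assoc P Y (Y), ← mul_assoc]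
  rw [habs _ _ hcomm.eq, W_idem, hYY, hMM, smul_smul, smul_smul]
  norm_num

-- action of W and X on outer products
lemma W_mul_vmv_up (hwb : hamWeight b = n / 2) (hwb' : hamWeight (bflip b) = n / 2)
    (v : QState n → ℂ) :
    ProjW n (n / 2) * vecMulVec (upv b) v = vecMulVec (upv b) v := by
  ext c c'
  rw [ProjW, diagonal_mul, vecMulVec_apply, ← mul_assoc, w_upv hwb hwb']

lemma W_mul_vmv_um (hwb : hamWeight b = n / 2) (hwb' : hamWeight (bflip b) = n / 2)
    (v : QState n → ℂ) :
    ProjW n (n / 2) * vecMulVec (umv b) v = vecMulVec (umv b) v := by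
  ext c c'
  rw [ProjW, diagonal_mul, vecMulVec_apply, ← mul_assoc, w_umv hwb hwb']

lemma vmv_up_mul_W (hwb : hamWeight b = n / 2) (hwb' : hamWeight (bflip b) = n / 2)
    (u : QState n → ℂ) :
    vecMulVec u (upv b) * ProjW n (n / 2) = vecMulVec u (upv b) := by
  ext c c'
  rw [ProjW, mul_diagonal, vecMulVec_apply, mul_assoc,
    mul_comm (upv b c'), w_upv hwb hwb']

lemma vmv_um_mul_W (hwb : hamWeight b = n / 2) (hwb' : hamWeight (bflip b) = n / 2)
    (u : QState n → ℂ) :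
    vecMulVec u (umv b) * ProjW n (n / 2) = vecMulVec u (umv b) := by
  ext c c'
  rw [ProjW, mul_diagonal, vecMulVec_apply, mul_assoc,
    mul_comm (umv b c'), w_umv hwb hwb']

lemma X_mul_vmv_up (v : QState n → ℂ) :
    XallMat n * vecMulVec (upv b) v = vecMulVec (upv b) v := by
  ext c c'
  rw [X_mul_apply, vecMulVec_apply, upv_flip, vecMulVec_apply]

lemma X_mul_vmv_um (v : QState n → ℂ) :
    XallMat n * vecMulVec (umv b) v = -vecMulVec (umv b) v := by
  ext c c'
  rw [X_mul_apply, vecMulVec_apply, neg_apply, vecMulVec_apply, umv_flip]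
  ring

lemma vmv_up_mul_X (u : QState n → ℂ) :
    vecMulVec u (upv b) * XallMat n = vecMulVec u (upv b) := by
  ext c c'
  rw [mul_X_apply, vecMulVec_apply, upv_flip, vecMulVec_apply]

lemma vmv_um_mul_X (u : QState n → ℂ) :
    vecMulVec u (umv b) * XallMat n = -vecMulVec u (umv b) := by
  ext c c'
  rw [mul_X_apply, vecMulVec_apply, neg_apply, vecMulVec_apply, umv_flip]
  ring

end Projlayer

section Rlayer

lemma zval_sq (x : Fin 2) : zval x * zval x = 1 := by
  fin_cases x <;> norm_num [zval]

lemma zval_flip (x : Fin 2) : zval (x + 1) = -zval x := by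
  fin_cases x <;> norm_num [zval] <;> rfl

lemma zval_ne {x y : Fin 2} (h : x ≠ y) : zval x = -zval y := by
  fin_cases x <;> fin_cases y <;> simp_all [zval] <;> rfl

variable {n : ℕ}

def swapb {n : ℕ} (i j : Fin n) (c : QState n) : QState n :=
  fun k => if k = i then c j else if k = j then c i else c k

variable {i j : Fin n}

lemma swapb_i (hij : i ≠ j) (c : QState n) : swapb i j c i = c j := by simp [swapb]

lemma swapb_j (hij : i ≠ j) (c : QState n) : swapb i j c j = c i := by
  have hji : ¬ (j = i) := fun h => hij h.symm
  simp [swapb, hji]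

lemma swapb_other (c : QState n) {k : Fin n} (hk1 : k ≠ i) (hk2 : k ≠ j) :
    swapb i j c k = c k := by simp [swapb, hk1, hk2]

lemma Rmat_eq (hij : i ≠ j) : Rmat n i j = fun c c' =>
    if c i ≠ c j ∧ c' = swapb i j c then 1 else 0 := by
  funext c c'
  unfold Rmat
  apply if_congr _ rfl rfl
  constructor
  · rintro ⟨h1, h2, h3, h4⟩
    refine ⟨h1, funext fun k => ?_⟩
    by_cases hk1 : k = i
    · subst hk1; rw [h2, swapb_i hij]
    · by_cases hk2 : k = j
      · subst hk2; rw [h3, swapb_j hij]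
      · rw [h4 k hk1 hk2, swapb_other c hk1 hk2]
  · rintro ⟨h1, rfl⟩
    exact ⟨h1, swapb_i hij c, swapb_j hij c, fun k hk1 hk2 => swapb_other c hk1 hk2⟩

lemma swapb_swapb (hij : i ≠ j) (c : QState n) : swapb i j (swapb i j c) = c := by
  funext k
  by_cases hk1 : k = i
  · subst hk1; rw [swapb_i hij, swapb_j hij]
  · by_cases hk2 : k = j
    · subst hk2; rw [swapb_j hij, swapb_i hij]
    · rw [swapb_other _ hk1 hk2, swapb_other _ hk1 hk2]

lemma swapb_bflip (hij : i ≠ j) (c : QState n) :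
    swapb i j (bflip c) = bflip (swapb i j c) := by
  funext k
  by_cases hk1 : k = i
  · subst hk1; rw [swapb_i hij]; simp [bflip, swapb_i hij]
  · by_cases hk2 : k = j
    · subst hk2; rw [swapb_j hij]; simp [bflip, swapb_j hij]
    · rw [swapb_other _ hk1 hk2]; simp [bflip, swapb_other _ hk1 hk2]

lemma hamWeight_swapb (hij : i ≠ j) (c : QState n) :
    hamWeight (swapb i j c) = hamWeight c := by
  unfold hamWeight
  rw [← Equiv.sum_comp (Equiv.swap i j) (fun k => ((swapb i j c k : ℕ)))]
  apply Finset.sum_congr rfl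
  intro k _
  by_cases hk1 : k = i
  · subst hk1; rw [Equiv.swap_apply_left, swapb_j hij]
  · by_cases hk2 : k = j
    · subst hk2; rw [Equiv.swap_apply_right, swapb_i hij]
    · rw [Equiv.swap_apply_of_ne_of_ne hk1 hk2, swapb_other _ hk1 hk2]

lemma ne_flip_iff {x y : Fin 2} : x + 1 ≠ y + 1 ↔ x ≠ y := by revert x y; decide

lemma R_comm_X (hij : i ≠ j) : Commute (Rmat n i j) (XallMat n) := by
  unfold Commute SemiconjBy
  ext c c'
  rw [mul_X_apply, X_mul_apply]
  simp only [Rmat_eq hij]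
  apply if_congr _ rfl rfl
  constructor
  · rintro ⟨h1, h2⟩
    refine ⟨ne_flip_iff.mpr h1, ?_⟩
    rw [swapb_bflip hij]
    exact bflip_eq_iff.mp h2
  · rintro ⟨h1, h2⟩
    refine ⟨ne_flip_iff.mp h1, ?_⟩
    rw [h2, ← swapb_bflip hij, bflip_bflip]

lemma R_comm_diag (hij : i ≠ j) {w : QState n → ℂ}
    (hw : ∀ c, c i ≠ c j → w (swapb i j c) = w c) :
    Commute (Matrix.diagonal w) (Rmat n i j) := by
  unfold Commute SemiconjBy
  ext c c'
  rw [diagonal_mul, mul_diagonal]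
  simp only [Rmat_eq hij]
  by_cases h : c i ≠ c j ∧ c' = swapb i j c
  · rw [if_pos h]
    obtain ⟨h1, rfl⟩ := h
    rw [mul_one, one_mul, hw c h1]
  · rw [if_neg h, mul_zero, zero_mul]

lemma S_anticomm_R (hij : i ≠ j) {k₀ : Fin n} (hk1 : k₀ ≠ i) (hk2 : k₀ ≠ j) :
    Matrix.diagonal (fun c => zval (c i) * zval (c k₀)) * Rmat n i j
      = -(Rmat n i j * Matrix.diagonal (fun c => zval (c i) * zval (c k₀))) := by
  ext c c'
  rw [diagonal_mul, neg_apply, mul_diagonal]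
  simp only [Rmat_eq hij]
  by_cases h : c i ≠ c j ∧ c' = swapb i j c
  · rw [if_pos h]
    obtain ⟨h1, rfl⟩ := h
    rw [mul_one, one_mul, swapb_i hij, swapb_other _ hk1 hk2]
    rw [zval_ne h1]
    ring
  · rw [if_neg h, mul_zero, zero_mul, neg_zero]

end Rlayer


section Extra
variable {n : ℕ}

lemma diag_comm_diag (f g : QState n → ℂ) :
    Commute (Matrix.diagonal f) (Matrix.diagonal g) := by
  unfold Commute SemiconjBy
  rw [diagonal_mul_diagonal, diagonal_mul_diagonal]
  apply congrArg
  funext c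
  ring

lemma exists_third (hn : 3 ≤ n) (i j : Fin n) : ∃ k : Fin n, k ≠ i ∧ k ≠ j := by
  by_contra h
  push_neg at h
  have hsub : (Finset.univ : Finset (Fin n)) ⊆ {i, j} := by
    intro k _
    rcases eq_or_ne k i with hk | hk
    · simp [hk]
    · simp [h k hk]
  have h1 := Finset.card_le_card hsub
  have h2 : ({i, j} : Finset (Fin n)).card ≤ 2 := by
    apply le_trans (Finset.card_insert_le _ _)
    simp
  rw [Finset.card_univ, Fintype.card_fin] at h1
  omega

lemma sectorproj_mul (s ε : ℂ) (A : QMat n) (hW : ProjW n (n / 2) * A = A)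
    (hX : XallMat n * A = ε • A) :
    (ProjW n (n / 2) * ((2:ℂ)⁻¹ • ((1 : QMat n) + s • XallMat n))) * A
      = ((2:ℂ)⁻¹ * (1 + s * ε)) • A := by
  rw [mul_assoc, smul_mul_assoc, add_mul, one_mul, smul_mul_assoc, hX, mul_smul_comm]
  have hc : A + s • ε • A = (1 + s * ε) • A := by
    rw [add_smul, one_smul, smul_smul]
  rw [hc, mul_smul_comm, hW, smul_smul]

lemma mul_sectorproj (s ε : ℂ) (A : QMat n) (hW : A * ProjW n (n / 2) = A)
    (hX : A * XallMat n = ε • A) :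
    A * (ProjW n (n / 2) * ((2:ℂ)⁻¹ • ((1 : QMat n) + s • XallMat n)))
      = ((2:ℂ)⁻¹ * (1 + s * ε)) • A := by
  rw [← mul_assoc, hW, mul_smul_comm, mul_add, mul_one, mul_smul_comm, hX]
  have hc : A + s • ε • A = (1 + s * ε) • A := by
    rw [add_smul, one_smul, smul_smul]
  rw [hc, smul_smul]

end Extra


set_option maxHeartbeats 1000000 in
/-- **2-level half-filled-sector unitaries violate the extra determinant constraint.**
Let `n ≥ 3` be even and `b` a bit string of Hamming weight `n/2`, with bitwise
complement `b̄`. Let `H = |b⟩⟨b̄| + |b̄⟩⟨b|` and `V = exp(iθH)` with `θ ≠ 0 mod 2π`.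
Then the determinant of `V` restricted to the intersection of the Hamming-weight-`n/2`
sector with the `±1` eigenspace of `X^{⊗n}` equals `e^{±iθ}`; in particular `V` is not
a finite product of exponentials `exp(iα R_{ij})` of XY interactions. -/
theorem half_filled_two_level_not_XY_realizable
    (n : ℕ) (hn : 3 ≤ n) (hev : Even n)
    (b : QState n) (hb : hamWeight b = n / 2)
    (θ : ℝ) (hθ : ∀ k : ℤ, θ ≠ k * (2 * Real.pi))
    (H : QMat n)
    (hH : H = fun c c' =>
      if (c = b ∧ c' = bflip b) ∨ (c = bflip b ∧ c' = b) then 1 else 0)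
    (V : QMat n) (hVdef : V = mexp ((Complex.I * θ) • H)) :
    sectorDet (ProjW n (n / 2) * ((2 : ℂ)⁻¹ • ((1 : QMat n) + XallMat n))) V
        = Complex.exp (Complex.I * θ) ∧
    sectorDet (ProjW n (n / 2) * ((2 : ℂ)⁻¹ • ((1 : QMat n) - XallMat n))) V
        = Complex.exp (-(Complex.I * θ)) ∧
    ¬ ∃ L : List (ℝ × Fin n × Fin n),
        (∀ x ∈ L, x.2.1 ≠ x.2.2) ∧
        (L.map (fun x => mexp ((Complex.I * x.1) • Rmat n x.2.1 x.2.2))).prod = V := by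
  have hn1 : 1 ≤ n := by omega
  have hbb : ¬ b = bflip b := fun h => (bflip_ne b hn1) h.symm
  have hwb' : hamWeight (bflip b) = n / 2 := (hamWeight_bflip_iff hev b).mpr hb
  have hone : (1 : QMat n) + XallMat n = 1 + (1:ℂ) • XallMat n := by rw [one_smul]
  have hmone : (1 : QMat n) - XallMat n = 1 + (-1:ℂ) • XallMat n := by
    rw [neg_one_smul, sub_eq_add_neg]
  -- outer products and their algebra
  have hApAp : vecMulVec (upv b) (upv b) * vecMulVec (upv b) (upv b)
      = (2:ℂ) • vecMulVec (upv b) (upv b) := by rw [outer_mul_outer, up_dot_up hbb]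
  have hAmAm : vecMulVec (umv b) (umv b) * vecMulVec (umv b) (umv b)
      = (2:ℂ) • vecMulVec (umv b) (umv b) := by rw [outer_mul_outer, um_dot_um hbb]
  have hApAm : vecMulVec (upv b) (upv b) * vecMulVec (umv b) (umv b) = 0 := by
    rw [outer_mul_outer, up_dot_um hbb, zero_smul]
  have hAmAp : vecMulVec (umv b) (umv b) * vecMulVec (upv b) (upv b) = 0 := by
    rw [outer_mul_outer, um_dot_up hbb, zero_smul]
  have hPpPp : ((2:ℂ)⁻¹ • vecMulVec (upv b) (upv b)) * ((2:ℂ)⁻¹ • vecMulVec (upv b) (upv b))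
      = (2:ℂ)⁻¹ • vecMulVec (upv b) (upv b) := by
    rw [smul_mul_assoc, mul_smul_comm, hApAp, smul_smul, smul_smul]
    norm_num
  have hPmPm : ((2:ℂ)⁻¹ • vecMulVec (umv b) (umv b)) * ((2:ℂ)⁻¹ • vecMulVec (umv b) (umv b))
      = (2:ℂ)⁻¹ • vecMulVec (umv b) (umv b) := by
    rw [smul_mul_assoc, mul_smul_comm, hAmAm, smul_smul, smul_smul]
    norm_num
  have hPpPm : ((2:ℂ)⁻¹ • vecMulVec (upv b) (upv b)) * ((2:ℂ)⁻¹ • vecMulVec (umv b) (umv b))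
      = 0 := by
    rw [smul_mul_assoc, mul_smul_comm, hApAm, smul_zero, smul_zero]
  have hPmPp : ((2:ℂ)⁻¹ • vecMulVec (umv b) (umv b)) * ((2:ℂ)⁻¹ • vecMulVec (upv b) (upv b))
      = 0 := by
    rw [smul_mul_assoc, mul_smul_comm, hAmAp, smul_zero, smul_zero]
  -- explicit form of V
  have hH2 : H = (2:ℂ)⁻¹ • vecMulVec (upv b) (upv b) - (2:ℂ)⁻¹ • vecMulVec (umv b) (umv b) := by
    rw [hH]; exact Hdecomp hbb
  have hsplit : (Complex.I * (θ:ℂ)) • H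
      = (Complex.I * (θ:ℂ)) • ((2:ℂ)⁻¹ • vecMulVec (upv b) (upv b))
        + (-(Complex.I * (θ:ℂ))) • ((2:ℂ)⁻¹ • vecMulVec (umv b) (umv b)) := by
    rw [hH2, smul_sub, neg_smul, sub_eq_add_neg]
  have hcomm0 : Commute ((Complex.I * (θ:ℂ)) • ((2:ℂ)⁻¹ • vecMulVec (upv b) (upv b)))
      ((-(Complex.I * (θ:ℂ))) • ((2:ℂ)⁻¹ • vecMulVec (umv b) (umv b))) := by
    unfold Commute SemiconjBy
    rw [smul_mul_assoc, mul_smul_comm, hPpPm, smul_mul_assoc, mul_smul_comm, hPmPp]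
    simp only [smul_zero]
  have hV : V = 1 + (Complex.exp (Complex.I * θ) - 1) • ((2:ℂ)⁻¹ • vecMulVec (upv b) (upv b))
      + (Complex.exp (-(Complex.I * θ)) - 1) • ((2:ℂ)⁻¹ • vecMulVec (umv b) (umv b)) := by
    rw [hVdef, hsplit, mexp_add_of_commute hcomm0, mexp_smul_idem hPpPp, mexp_smul_idem hPmPm]
    have hz : ((Complex.exp (Complex.I * (θ:ℂ)) - 1) • ((2:ℂ)⁻¹ • vecMulVec (upv b) (upv b)))
        * ((Complex.exp (-(Complex.I * (θ:ℂ))) - 1) • ((2:ℂ)⁻¹ • vecMulVec (umv b) (umv b)))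
        = 0 := by
      rw [smul_mul_assoc, mul_smul_comm, hPpPm, smul_zero, smul_zero]
    rw [mul_add, mul_one, add_mul, one_mul, hz, add_zero]
  -- absorption identities
  have hXAp : XallMat n * vecMulVec (upv b) (upv b) = (1:ℂ) • vecMulVec (upv b) (upv b) := by
    rw [X_mul_vmv_up, one_smul]
  have hXAm : XallMat n * vecMulVec (umv b) (umv b) = (-1:ℂ) • vecMulVec (umv b) (umv b) := by
    rw [X_mul_vmv_um, neg_one_smul]
  have hApX : vecMulVec (upv b) (upv b) * XallMat n = (1:ℂ) • vecMulVec (upv b) (upv b) := by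
    rw [vmv_up_mul_X, one_smul]
  have hAmX : vecMulVec (umv b) (umv b) * XallMat n = (-1:ℂ) • vecMulVec (umv b) (umv b) := by
    rw [vmv_um_mul_X, neg_one_smul]
  -- plus sector absorptions
  have hPlAp : (ProjW n (n / 2) * ((2:ℂ)⁻¹ • ((1 : QMat n) + XallMat n)))
      * vecMulVec (upv b) (upv b) = vecMulVec (upv b) (upv b) := by
    rw [hone, sectorproj_mul 1 1 _ (W_mul_vmv_up hb hwb' _) hXAp]
    norm_num
  have hPlAm : (ProjW n (n / 2) * ((2:ℂ)⁻¹ • ((1 : QMat n) + XallMat n)))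
      * vecMulVec (umv b) (umv b) = 0 := by
    rw [hone, sectorproj_mul 1 (-1) _ (W_mul_vmv_um hb hwb' _) hXAm]
    norm_num
  have hApPl : vecMulVec (upv b) (upv b)
      * (ProjW n (n / 2) * ((2:ℂ)⁻¹ • ((1 : QMat n) + XallMat n)))
      = vecMulVec (upv b) (upv b) := by
    rw [hone, mul_sectorproj 1 1 _ (vmv_up_mul_W hb hwb' _) hApX]
    norm_num
  have hAmPl : vecMulVec (umv b) (umv b)
      * (ProjW n (n / 2) * ((2:ℂ)⁻¹ • ((1 : QMat n) + XallMat n))) = 0 := by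
    rw [hone, mul_sectorproj 1 (-1) _ (vmv_um_mul_W hb hwb' _) hAmX]
    norm_num
  -- minus sector absorptions
  have hMnAp : (ProjW n (n / 2) * ((2:ℂ)⁻¹ • ((1 : QMat n) - XallMat n)))
      * vecMulVec (upv b) (upv b) = 0 := by
    rw [hmone, sectorproj_mul (-1) 1 _ (W_mul_vmv_up hb hwb' _) hXAp]
    norm_num
  have hMnAm : (ProjW n (n / 2) * ((2:ℂ)⁻¹ • ((1 : QMat n) - XallMat n)))
      * vecMulVec (umv b) (umv b) = vecMulVec (umv b) (umv b) := by
    rw [hmone, sectorproj_mul (-1) (-1) _ (W_mul_vmv_um hb hwb' _) hXAm]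
    norm_num
  have hApMn : vecMulVec (upv b) (upv b)
      * (ProjW n (n / 2) * ((2:ℂ)⁻¹ • ((1 : QMat n) - XallMat n))) = 0 := by
    rw [hmone, mul_sectorproj (-1) 1 _ (vmv_up_mul_W hb hwb' _) hApX]
    norm_num
  have hAmMn : vecMulVec (umv b) (umv b)
      * (ProjW n (n / 2) * ((2:ℂ)⁻¹ • ((1 : QMat n) - XallMat n)))
      = vecMulVec (umv b) (umv b) := by
    rw [hmone, mul_sectorproj (-1) (-1) _ (vmv_um_mul_W hb hwb' _) hAmX]
    norm_num
  -- idempotence of the sector projectors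
  have hPlidem : (ProjW n (n / 2) * ((2:ℂ)⁻¹ • ((1 : QMat n) + XallMat n)))
      * (ProjW n (n / 2) * ((2:ℂ)⁻¹ • ((1 : QMat n) + XallMat n)))
      = ProjW n (n / 2) * ((2:ℂ)⁻¹ • ((1 : QMat n) + XallMat n)) := by
    have := sector_proj_idem (n := n) hev (s := (1:ℂ)) (by norm_num)
    simpa [one_smul] using this
  have hMnidem : (ProjW n (n / 2) * ((2:ℂ)⁻¹ • ((1 : QMat n) - XallMat n)))
      * (ProjW n (n / 2) * ((2:ℂ)⁻¹ • ((1 : QMat n) - XallMat n)))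
      = ProjW n (n / 2) * ((2:ℂ)⁻¹ • ((1 : QMat n) - XallMat n)) := by
    have := sector_proj_idem (n := n) hev (s := (-1:ℂ)) (by norm_num)
    rw [hmone]
    simpa [neg_one_smul, sub_eq_add_neg] using this
  -- plus sector determinant
  have main1 : sectorDet (ProjW n (n / 2) * ((2 : ℂ)⁻¹ • ((1 : QMat n) + XallMat n))) V
      = Complex.exp (Complex.I * θ) := by
    set Pl : QMat n := ProjW n (n / 2) * ((2:ℂ)⁻¹ • ((1 : QMat n) + XallMat n)) with hPldef
    have h1 : Pl * V
        = Pl + (Complex.exp (Complex.I * θ) - 1) • ((2:ℂ)⁻¹ • vecMulVec (upv b) (upv b)) := by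
      rw [hV, mul_add, mul_add, mul_one]
      simp only [mul_smul_comm]
      rw [hPlAp, hPlAm, smul_zero, smul_zero, add_zero]
    have h2 : (Pl + (Complex.exp (Complex.I * θ) - 1) • ((2:ℂ)⁻¹ • vecMulVec (upv b) (upv b)))
          * Pl
        = Pl + (Complex.exp (Complex.I * θ) - 1) • ((2:ℂ)⁻¹ • vecMulVec (upv b) (upv b)) := by
      rw [add_mul, hPlidem]
      simp only [smul_mul_assoc]
      rw [hApPl]
    have h3 : Pl * V * Pl + (1 - Pl)
        = 1 + (Complex.exp (Complex.I * θ) - 1) • ((2:ℂ)⁻¹ • vecMulVec (upv b) (upv b)) := by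
      rw [h1, h2]
      abel
    rw [sectorDet, h3, smul_smul, _root_.smul_vecMulVec, det_one_add_vecMulVec, dotProduct_smul,
      up_dot_up hbb, smul_eq_mul]
    ring
  -- minus sector determinant
  have main2 : sectorDet (ProjW n (n / 2) * ((2 : ℂ)⁻¹ • ((1 : QMat n) - XallMat n))) V
      = Complex.exp (-(Complex.I * θ)) := by
    set Pm : QMat n := ProjW n (n / 2) * ((2:ℂ)⁻¹ • ((1 : QMat n) - XallMat n)) with hPmdef
    have h1 : Pm * V
        = Pm + (Complex.exp (-(Complex.I * θ)) - 1) • ((2:ℂ)⁻¹ • vecMulVec (umv b) (umv b)) := by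
      rw [hV, mul_add, mul_add, mul_one]
      simp only [mul_smul_comm]
      rw [hMnAp, hMnAm, smul_zero, smul_zero]
      abel
    have h2 : (Pm + (Complex.exp (-(Complex.I * θ)) - 1) • ((2:ℂ)⁻¹ • vecMulVec (umv b) (umv b)))
          * Pm
        = Pm + (Complex.exp (-(Complex.I * θ)) - 1) • ((2:ℂ)⁻¹ • vecMulVec (umv b) (umv b)) := by
      rw [add_mul, hMnidem]
      simp only [smul_mul_assoc]
      rw [hAmMn]
    have h3 : Pm * V * Pm + (1 - Pm)
        = 1 + (Complex.exp (-(Complex.I * θ)) - 1) • ((2:ℂ)⁻¹ • vecMulVec (umv b) (umv b)) := by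
      rw [h1, h2]
      abel
    rw [sectorDet, h3, smul_smul, _root_.smul_vecMulVec, det_one_add_vecMulVec, dotProduct_smul,
      um_dot_um hbb, smul_eq_mul]
    ring
  refine ⟨main1, main2, ?_⟩
  -- part 3
  rintro ⟨L, hLne, hLprod⟩
  have hfact : ∀ x ∈ L,
      Commute (mexp ((Complex.I * (x.1:ℂ)) • Rmat n x.2.1 x.2.2))
        (ProjW n (n / 2) * ((2:ℂ)⁻¹ • ((1 : QMat n) + XallMat n)))
      ∧ sectorDet (ProjW n (n / 2) * ((2:ℂ)⁻¹ • ((1 : QMat n) + XallMat n)))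
          (mexp ((Complex.I * (x.1:ℂ)) • Rmat n x.2.1 x.2.2)) = 1 := by
    intro x hx
    obtain ⟨α, i, j⟩ := x
    have hij : i ≠ j := hLne ⟨α, i, j⟩ hx
    obtain ⟨k₀, hk1, hk2⟩ := exists_third hn i j
    have hWR : Commute (ProjW n (n / 2)) (Rmat n i j) :=
      R_comm_diag hij (fun c _ => by rw [hamWeight_swapb hij])
    have hRP : Commute (Rmat n i j)
        (ProjW n (n / 2) * ((2:ℂ)⁻¹ • ((1 : QMat n) + XallMat n))) := by
      have := comm_sector_proj (A := Rmat n i j) hWR.symm (R_comm_X hij) (1:ℂ)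
      simpa [one_smul] using this
    have hSS : Matrix.diagonal (fun c : QState n => zval (c i) * zval (c k₀))
        * Matrix.diagonal (fun c : QState n => zval (c i) * zval (c k₀)) = 1 := by
      rw [diagonal_mul_diagonal]
      have hfun : (fun c : QState n => zval (c i) * zval (c k₀) * (zval (c i) * zval (c k₀)))
          = fun _ => (1:ℂ) := by
        funext c
        rw [show zval (c i) * zval (c k₀) * (zval (c i) * zval (c k₀))
            = zval (c i) * zval (c i) * (zval (c k₀) * zval (c k₀)) by ring,
          zval_sq, zval_sq, one_mul]
      rw [hfun, diagonal_one]
    have hSW : Commute (Matrix.diagonal (fun c : QState n => zval (c i) * zval (c k₀)))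
        (ProjW n (n / 2)) := diag_comm_diag _ _
    have hSX : Commute (Matrix.diagonal (fun c : QState n => zval (c i) * zval (c k₀)))
        (XallMat n) := by
      apply diag_comm_X
      intro c
      show zval (c i + 1) * zval (c k₀ + 1) = zval (c i) * zval (c k₀)
      rw [zval_flip, zval_flip]
      ring
    have hSP : Commute (Matrix.diagonal (fun c : QState n => zval (c i) * zval (c k₀)))
        (ProjW n (n / 2) * ((2:ℂ)⁻¹ • ((1 : QMat n) + XallMat n))) := by
      have := comm_sector_proj hSW hSX (1:ℂ)
      simpa [one_smul] using this
    have hSRS : Matrix.diagonal (fun c : QState n => zval (c i) * zval (c k₀))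
        * ((Complex.I * ((α/2 : ℝ):ℂ)) • Rmat n i j)
        * Matrix.diagonal (fun c : QState n => zval (c i) * zval (c k₀))
        = -((Complex.I * ((α/2 : ℝ):ℂ)) • Rmat n i j) := by
      rw [mul_smul_comm, smul_mul_assoc, S_anticomm_R hij hk1 hk2, neg_mul, mul_assoc, hSS,
        mul_one, smul_neg]
    have hgP : Commute (mexp ((Complex.I * ((α/2 : ℝ):ℂ)) • Rmat n i j))
        (ProjW n (n / 2) * ((2:ℂ)⁻¹ • ((1 : QMat n) + XallMat n))) :=
      commute_mexp (hRP.smul_left _)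
    have hgP' : Commute (mexp (-((Complex.I * ((α/2 : ℝ):ℂ)) • Rmat n i j)))
        (ProjW n (n / 2) * ((2:ℂ)⁻¹ • ((1 : QMat n) + XallMat n))) :=
      commute_mexp ((hRP.smul_left _).neg_left)
    have hhalf : (Complex.I * (α:ℂ)) • Rmat n i j
        = (Complex.I * ((α/2 : ℝ):ℂ)) • Rmat n i j + (Complex.I * ((α/2 : ℝ):ℂ)) • Rmat n i j := by
      rw [← add_smul]
      congr 1
      push_cast
      ring
    have hmexpneg : mexp (-((Complex.I * ((α/2 : ℝ):ℂ)) • Rmat n i j))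
        = Matrix.diagonal (fun c : QState n => zval (c i) * zval (c k₀))
          * mexp ((Complex.I * ((α/2 : ℝ):ℂ)) • Rmat n i j)
          * Matrix.diagonal (fun c : QState n => zval (c i) * zval (c k₀)) := by
      rw [← mexp_conj hSS, hSRS]
    have hd : sectorDet (ProjW n (n / 2) * ((2:ℂ)⁻¹ • ((1 : QMat n) + XallMat n)))
        (mexp (-((Complex.I * ((α/2 : ℝ):ℂ)) • Rmat n i j)))
        = sectorDet (ProjW n (n / 2) * ((2:ℂ)⁻¹ • ((1 : QMat n) + XallMat n)))
          (mexp ((Complex.I * ((α/2 : ℝ):ℂ)) • Rmat n i j)) := by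
      rw [hmexpneg, sectorDet_conj hSS hSP]
    have hdd : sectorDet (ProjW n (n / 2) * ((2:ℂ)⁻¹ • ((1 : QMat n) + XallMat n)))
          (mexp ((Complex.I * ((α/2 : ℝ):ℂ)) • Rmat n i j))
        * sectorDet (ProjW n (n / 2) * ((2:ℂ)⁻¹ • ((1 : QMat n) + XallMat n)))
          (mexp ((Complex.I * ((α/2 : ℝ):ℂ)) • Rmat n i j)) = 1 := by
      have hprod : sectorDet (ProjW n (n / 2) * ((2:ℂ)⁻¹ • ((1 : QMat n) + XallMat n)))
            (mexp ((Complex.I * ((α/2 : ℝ):ℂ)) • Rmat n i j))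
          * sectorDet (ProjW n (n / 2) * ((2:ℂ)⁻¹ • ((1 : QMat n) + XallMat n)))
            (mexp (-((Complex.I * ((α/2 : ℝ):ℂ)) • Rmat n i j))) = 1 := by
        rw [← sectorDet_mul hPlidem hgP hgP', mexp_mul_mexp_neg, sectorDet_one hPlidem]
      rw [hd] at hprod
      exact hprod
    constructor
    · exact commute_mexp (hRP.smul_left _)
    · show sectorDet _ (mexp ((Complex.I * (α:ℂ)) • Rmat n i j)) = 1
      rw [hhalf, mexp_add_of_commute (Commute.refl _), sectorDet_mul hPlidem hgP hgP, hdd]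
  have hind : ∀ l : List (ℝ × Fin n × Fin n), (∀ x ∈ l, x ∈ L) →
      Commute ((l.map (fun x => mexp ((Complex.I * x.1) • Rmat n x.2.1 x.2.2))).prod)
        (ProjW n (n / 2) * ((2:ℂ)⁻¹ • ((1 : QMat n) + XallMat n)))
      ∧ sectorDet (ProjW n (n / 2) * ((2:ℂ)⁻¹ • ((1 : QMat n) + XallMat n)))
          ((l.map (fun x => mexp ((Complex.I * x.1) • Rmat n x.2.1 x.2.2))).prod) = 1 := by
    intro l
    induction l with
    | nil =>
      intro _
      exact ⟨Commute.one_left _, sectorDet_one hPlidem⟩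
    | cons x xs ih =>
      intro hmem
      have hx := hfact x (hmem x (List.mem_cons_self))
      have hxs := ih (fun y hy => hmem y (List.mem_cons_of_mem _ hy))
      rw [List.map_cons, List.prod_cons]
      refine ⟨hx.1.mul_left hxs.1, ?_⟩
      rw [sectorDet_mul hPlidem hx.1 hxs.1, hx.2, hxs.2, one_mul]
  have h1 := (hind L (fun _ h => h)).2
  rw [hLprod, main1, Complex.exp_eq_one_iff] at h1
  obtain ⟨k, hk⟩ := h1
  have h2 : (θ:ℂ) * Complex.I = ((k:ℂ) * (2 * (Real.pi:ℂ))) * Complex.I := by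
    linear_combination hk
  have h3 := mul_right_cancel₀ Complex.I_ne_zero h2
  have h4 : θ = (k:ℝ) * (2 * Real.pi) := by exact_mod_cast h3
  exact hθ k h4

end
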